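/- For groups H, K with elements h ∈ H, k ∈ K, there is a group isomorphism Λ_{H×K}(h,k) ≅ Λ_H(h) ×_𝕋 Λ_K(k), where Λ_G(g) = (C_G(g) × ℝ)/⟨(g,−1)⟩ and the fiber product is taken over the projections to 𝕋 = ℝ/ℤ. -/

import Mathlib

section Lambda

variable {G : Type*} [Group G]

lemma mem_centralizer_self (g : G) : g ∈ Subgroup.centralizer ({g} : Set G) := by
  rw [Subgroup.mem_centralizer_iff]
  rintro h rfl
  rfl

/-- The central element `(g, −1)` of `C_G(g) × ℝ`. -/
def lamGen (g : G) : Subgroup.centralizer ({g} : Set G) × Multiplicative ℝ :=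
  (⟨g, mem_centralizer_self g⟩, Multiplicative.ofAdd (-1 : ℝ))

lemma lamGen_comm (g : G) (c : Subgroup.centralizer ({g} : Set G) × Multiplicative ℝ) :
    Commute (lamGen g) c := by
  have h1 : g * (c.1 : G) = (c.1 : G) * g := by
    have := c.1.2
    rw [Subgroup.mem_centralizer_iff] at this
    exact this g rfl
  refine Prod.ext ?_ (mul_comm _ _)
  exact Subtype.ext h1

instance lamNormal (g : G) : (Subgroup.zpowers (lamGen g)).Normal := by
  constructor
  rintro n ⟨m, rfl⟩ c
  refine ⟨m, ?_⟩
  have hc := (lamGen_comm g c).zpow_left m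
  rw [← hc.eq, mul_assoc, mul_inv_cancel, mul_one]

/-- The enhanced centralizer `Λ_G(g) = (C_G(g) × ℝ)/⟨(g,−1)⟩`. -/
def Lam (g : G) :=
  (Subgroup.centralizer ({g} : Set G) × Multiplicative ℝ) ⧸ Subgroup.zpowers (lamGen g)

instance (g : G) : Group (Lam g) :=
  QuotientGroup.Quotient.group _

/-- The homomorphism `ℝ → ℝ/ℤ` (written multiplicatively). -/
noncomputable def circHom : Multiplicative ℝ →* Multiplicative (AddCircle (1 : ℝ)) :=
  AddMonoidHom.toMultiplicative (QuotientAddGroup.mk' (AddSubgroup.zmultiples (1 : ℝ)))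

noncomputable def preProj (g : G) :
    (Subgroup.centralizer ({g} : Set G) × Multiplicative ℝ) →*
      Multiplicative (AddCircle (1 : ℝ)) :=
  circHom.comp (MonoidHom.snd _ _)

lemma preProj_ker (g : G) :
    ∀ x ∈ Subgroup.zpowers (lamGen g), preProj g x = 1 := by
  rintro x ⟨m, rfl⟩
  rw [map_zpow]
  have h1 : preProj g (lamGen g) = 1 := by
    show Multiplicative.ofAdd (((-1 : ℝ) : AddCircle (1 : ℝ))) = 1
    have : ((-1 : ℝ) : AddCircle (1 : ℝ)) = 0 := by
      rw [AddCircle.coe_eq_zero_iff]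
      exact ⟨-1, by simp⟩
    rw [this]; rfl
  rw [h1, one_zpow]

/-- The projection `Λ_G(g) → 𝕋 = ℝ/ℤ`, `[h,t] ↦ t`. -/
noncomputable def lamProj (g : G) : Lam g →* Multiplicative (AddCircle (1 : ℝ)) :=
  QuotientGroup.lift _ (preProj g) (preProj_ker g)

end Lambda

/-- The fiber product `Λ_H(h) ×_𝕋 Λ_K(k)` over the projections to `𝕋 = ℝ/ℤ`. -/
noncomputable def fiberProd {H K : Type*} [Group H] [Group K] (h : H) (k : K) :
    Subgroup (Lam h × Lam k) where
  carrier := {p | lamProj h p.1 = lamProj k p.2}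
  one_mem' := by simp
  mul_mem' := by
    intro p q hp hq
    simp only [Set.mem_setOf_eq, Prod.fst_mul, Prod.snd_mul, map_mul] at *
    rw [hp, hq]
  inv_mem' := by
    intro p hp
    simp only [Set.mem_setOf_eq, Prod.fst_inv, Prod.snd_inv, map_inv] at *
    rw [hp]

section Aux

variable {H K : Type*} [Group H] [Group K] (h : H) (k : K)

lemma cent_fst {p : H × K} (hp : p ∈ Subgroup.centralizer ({(h, k)} : Set (H × K))) :
    p.1 ∈ Subgroup.centralizer ({h} : Set H) := by
  rw [Subgroup.mem_centralizer_iff] at hp ⊢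
  rintro x rfl
  exact congrArg Prod.fst (hp (x, k) rfl)

lemma cent_snd {p : H × K} (hp : p ∈ Subgroup.centralizer ({(h, k)} : Set (H × K))) :
    p.2 ∈ Subgroup.centralizer ({k} : Set K) := by
  rw [Subgroup.mem_centralizer_iff] at hp ⊢
  rintro x rfl
  exact congrArg Prod.snd (hp (h, x) rfl)

lemma cent_pair {a : H} {b : K} (ha : a ∈ Subgroup.centralizer ({h} : Set H))
    (hb : b ∈ Subgroup.centralizer ({k} : Set K)) :
    (a, b) ∈ Subgroup.centralizer ({(h, k)} : Set (H × K)) := by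
  rw [Subgroup.mem_centralizer_iff] at ha hb ⊢
  rintro x rfl
  exact Prod.ext (ha h rfl) (hb k rfl)

/-- Component map to `Lam h × Lam k` before quotienting. -/
noncomputable def toPair :
    (Subgroup.centralizer ({(h, k)} : Set (H × K)) × Multiplicative ℝ) →* Lam h × Lam k where
  toFun x := (QuotientGroup.mk (⟨x.1.1.1, cent_fst h k x.1.2⟩, x.2),
              QuotientGroup.mk (⟨x.1.1.2, cent_snd h k x.1.2⟩, x.2))
  map_one' := rfl
  map_mul' x y := rfl

lemma toPair_ker : ∀ x ∈ Subgroup.zpowers (lamGen ((h, k) : H × K)), toPair h k x = 1 := by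
  rintro x ⟨m, rfl⟩
  rw [map_zpow]
  have h1 : toPair h k (lamGen ((h, k) : H × K)) = 1 := by
    refine Prod.ext ?_ ?_
    · exact (QuotientGroup.eq_one_iff _).2 ⟨1, by simp [lamGen]⟩
    · exact (QuotientGroup.eq_one_iff _).2 ⟨1, by simp [lamGen]⟩
  rw [h1, one_zpow]

/-- The main homomorphism `Lam (h,k) →* Lam h × Lam k`. -/
noncomputable def lamMap : Lam ((h, k) : H × K) →* Lam h × Lam k :=
  QuotientGroup.lift _ (toPair h k) (toPair_ker h k)

lemma lamMap_mem (x : Lam ((h, k) : H × K)) : lamMap h k x ∈ fiberProd h k := by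
  induction x using QuotientGroup.induction_on with
  | H x => rfl

/-- The restricted homomorphism into the fiber product. -/
noncomputable def lamMap' : Lam ((h, k) : H × K) →* fiberProd h k :=
  (lamMap h k).codRestrict _ (lamMap_mem h k)

lemma lamMap'_injective : Function.Injective (lamMap' h k) := by
  rw [← MonoidHom.ker_eq_bot_iff, eq_bot_iff]
  intro x hx
  induction x using QuotientGroup.induction_on with
  | H x =>
    have hx' : lamMap h k (QuotientGroup.mk x) = 1 := by
      have := congrArg Subtype.val hx
      exact this
    have h1 : (QuotientGroup.mk (⟨x.1.1.1, cent_fst h k x.1.2⟩, x.2) : Lam h) = 1 :=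
      congrArg Prod.fst hx'
    have h2 : (QuotientGroup.mk (⟨x.1.1.2, cent_snd h k x.1.2⟩, x.2) : Lam k) = 1 :=
      congrArg Prod.snd hx'
    rw [QuotientGroup.eq_one_iff] at h1 h2
    obtain ⟨m, hm⟩ := h1
    obtain ⟨n, hn⟩ := h2
    have hm1 : (h : H) ^ m = x.1.1.1 := by
      have := congrArg (fun p => (p.1 : H)) hm
      simpa [lamGen] using this
    have hm2 : Multiplicative.toAdd x.2 = m • (-1 : ℝ) := by
      have := congrArg (fun p => Multiplicative.toAdd p.2) hm
      simpa [lamGen] using this.symm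
    have hn1 : (k : K) ^ n = x.1.1.2 := by
      have := congrArg (fun p => (p.1 : K)) hn
      simpa [lamGen] using this
    have hn2 : Multiplicative.toAdd x.2 = n • (-1 : ℝ) := by
      have := congrArg (fun p => Multiplicative.toAdd p.2) hn
      simpa [lamGen] using this.symm
    have hmn : m = n := by
      have : (m : ℝ) = (n : ℝ) := by
        have := hm2.symm.trans hn2
        simpa using this
      exact_mod_cast this
    subst hmn
    refine Subgroup.mem_bot.2 ?_
    refine (QuotientGroup.eq_one_iff _).2 ⟨m, ?_⟩
    refine Prod.ext (Subtype.ext (Prod.ext ?_ ?_)) ?_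
    · simpa [lamGen] using hm1
    · simpa [lamGen] using hn1
    · have : Multiplicative.toAdd ((Multiplicative.ofAdd (-1 : ℝ)) ^ m) =
          Multiplicative.toAdd x.2 := by simp [hm2]
      simpa [lamGen] using Multiplicative.toAdd.injective this

lemma lamMap'_surjective : Function.Surjective (lamMap' h k) := by
  rintro ⟨⟨x, y⟩, hxy⟩
  obtain ⟨⟨a, s⟩, rfl⟩ := QuotientGroup.mk_surjective x
  obtain ⟨⟨b, t⟩, rfl⟩ := QuotientGroup.mk_surjective y
  have hst : (Multiplicative.toAdd t - Multiplicative.toAdd s : ℝ) ∈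
      AddSubgroup.zmultiples (1 : ℝ) := by
    have hxy' : (QuotientAddGroup.mk (Multiplicative.toAdd s) :
        AddCircle (1 : ℝ)) = QuotientAddGroup.mk (Multiplicative.toAdd t) := hxy
    rw [QuotientAddGroup.eq] at hxy'
    simpa [neg_add_eq_sub] using hxy'
  obtain ⟨n, hn⟩ := hst
  -- the element ((a, b * k^n), s)
  refine ⟨QuotientGroup.mk (⟨(a.1, (b * (⟨k, mem_centralizer_self k⟩ : _) ^ n).1),
    cent_pair h k a.2 (b * (⟨k, mem_centralizer_self k⟩ : _) ^ n).2⟩, s), ?_⟩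
  refine Subtype.ext (Prod.ext ?_ ?_)
  · show (QuotientGroup.mk (⟨a.1, _⟩, s) : Lam h) = QuotientGroup.mk (a, s)
    congr 1
  · show (QuotientGroup.mk (⟨(b * (⟨k, mem_centralizer_self k⟩ : _) ^ n).1, _⟩, s) : Lam k)
        = QuotientGroup.mk (b, t)
    rw [QuotientGroup.eq]
    refine ⟨-n, ?_⟩
    have hb : (⟨(b * (⟨k, mem_centralizer_self k⟩ : _) ^ n).1, _⟩ :
        Subgroup.centralizer ({k} : Set K)) = b * (⟨k, mem_centralizer_self k⟩ : _) ^ n :=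
      Subtype.ext rfl
    refine Prod.ext ?_ ?_
    · show ((⟨k, mem_centralizer_self k⟩ : Subgroup.centralizer ({k} : Set K)) ^ (-n)) =
        ((⟨(b * (⟨k, mem_centralizer_self k⟩ : _) ^ n).1, _⟩ :
          Subgroup.centralizer ({k} : Set K)))⁻¹ * b
      rw [hb]
      group
    · show (Multiplicative.ofAdd (-1 : ℝ)) ^ (-n) = s⁻¹ * t
      apply Multiplicative.toAdd.injective
      have hn' : Multiplicative.toAdd t - Multiplicative.toAdd s = (n : ℝ) := by
        rw [← hn]; simp
      simp only [toAdd_zpow, toAdd_mul, toAdd_inv, toAdd_ofAdd, zsmul_eq_mul,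
        Int.cast_neg]
      linarith

end Aux

/-- For `h ∈ H`, `k ∈ K`, there is a group isomorphism
`Λ_{H×K}(h,k) ≅ Λ_H(h) ×_𝕋 Λ_K(k)`. -/
theorem stmt_15 {H K : Type*} [Group H] [Group K] (h : H) (k : K) :
    Nonempty (Lam ((h, k) : H × K) ≃* fiberProd h k) :=
  ⟨MulEquiv.ofBijective (lamMap' h k) ⟨lamMap'_injective h k, lamMap'_surjective h k⟩⟩
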